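/- Let S be a finite set of rational primes. For i = 1, 2 let a_i, b_i be coprime integers with b_i ≠ 0 and |a_i| ≠ |b_i|, such that every prime factor of a_i·b_i lies in S, and set F_i(n) equal to the largest positive divisor of |a_i^n − b_i^n| coprime to every prime in S. If F_1(n) = F_2(n) for all n ≥ 1, then a_1/b_1 = a_2/b_2 or a_1/b_1 = b_2/a_2. -/

import Mathlib

open Finset

/-! ### Elementary growth estimates -/

private lemma choose_term_le (c n k : ℕ) (hk : k ≤ n) :
    n.choose k * c ^ k ≤ (c + 1) ^ n := by
  rw [add_pow c 1 n]
  calc n.choose k * c ^ k = c ^ k * 1 ^ (n - k) * n.choose k := by ring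
    _ ≤ ∑ i ∈ range (n + 1), c ^ i * 1 ^ (n - i) * n.choose i :=
      Finset.single_le_sum (f := fun i => c ^ i * 1 ^ (n - i) * n.choose i)
        (fun i _ => Nat.zero_le _) (Finset.mem_range.mpr (Nat.lt_succ_of_le hk))

private lemma growth {A c m : ℕ} (hcm : c < m) {n : ℕ} (hn : 2 * A * c ^ 2 + 2 ≤ n) :
    A * n * c ^ n < m ^ n := by
  have hn2 : 2 ≤ n := by omega
  rcases Nat.eq_zero_or_pos c with rfl | hc
  · have h0 : (0 : ℕ) ^ n = 0 := zero_pow (by omega)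
    rw [h0, Nat.mul_zero]
    exact pow_pos (by omega) n
  · have hm : c + 1 ≤ m := hcm
    have hkey : A * n * c ^ 2 < n.choose 2 := by
      have hch : n.choose 2 = n * (n - 1) / 2 := Nat.choose_two_right n
      have heven : n * (n - 1) % 2 = 0 := by
        have h := Nat.even_mul_succ_self (n - 1)
        have h1 : (n - 1) * (n - 1 + 1) = n * (n - 1) := by
          rw [Nat.sub_add_cancel (by omega)]; ring
        rw [h1] at h
        exact Nat.even_iff.mp h
      have hlin : 2 * (A * n * c ^ 2) < n * (n - 1) := by
        calc 2 * (A * n * c ^ 2) = (2 * A * c ^ 2) * n := by ring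
          _ ≤ (n - 2) * n := Nat.mul_le_mul_right n (by omega)
          _ < (n - 1) * n := (Nat.mul_lt_mul_right (by omega)).mpr (by omega)
          _ = n * (n - 1) := by ring
      have h2d : 2 ∣ n * (n - 1) := Nat.dvd_of_mod_eq_zero heven
      rw [hch]
      exact (Nat.lt_div_iff_mul_lt' h2d _).mpr hlin
    have hsplit : c ^ n = c ^ 2 * c ^ (n - 2) := by
      rw [← pow_add]; congr 1; omega
    have hcs : n.choose (n - 2) = n.choose 2 := Nat.choose_symm (by omega : 2 ≤ n)
    calc A * n * c ^ n = (A * n * c ^ 2) * c ^ (n - 2) := by rw [hsplit]; ring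
      _ < n.choose 2 * c ^ (n - 2) :=
          (Nat.mul_lt_mul_right (pow_pos hc _)).mpr hkey
      _ = n.choose (n - 2) * c ^ (n - 2) := by rw [hcs]
      _ ≤ (c + 1) ^ n := choose_term_le c n (n - 2) (by omega)
      _ ≤ m ^ n := Nat.pow_le_pow_left hm n

private lemma two_pow_le {c m n : ℕ} (hcm : c < m) (hn : 2 * c ≤ n) (hn1 : 1 ≤ n) :
    2 * c ^ n ≤ m ^ n := by
  rcases Nat.eq_zero_or_pos c with rfl | hc
  · rw [zero_pow (by omega : n ≠ 0)]
    simp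
  · have hcc : c * c ^ (n - 1) = c ^ n := by
      rw [← pow_succ']; congr 1; omega
    have h1 : 2 * c ^ n = (2 * c) * c ^ (n - 1) := by rw [mul_assoc, hcc]
    have h2 : (2 * c) * c ^ (n - 1) ≤ n * c ^ (n - 1) :=
      Nat.mul_le_mul_right _ hn
    have h3 : n * c ^ (n - 1) = n.choose (n - 1) * c ^ (n - 1) := by
      rw [Nat.choose_symm (by omega : 1 ≤ n), Nat.choose_one_right]
    calc 2 * c ^ n = (2 * c) * c ^ (n - 1) := h1
      _ ≤ n * c ^ (n - 1) := h2
      _ = n.choose (n - 1) * c ^ (n - 1) := h3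
      _ ≤ (c + 1) ^ n := choose_term_le c n (n - 1) (by omega)
      _ ≤ m ^ n := Nat.pow_le_pow_left hcm n

/-! ### The S-part of a natural number -/

private def spart (T : Finset ℕ) (N : ℕ) : ℕ := ∏ p ∈ T, p ^ N.factorization p

private lemma spart_pos {T : Finset ℕ} (hT : ∀ p ∈ T, p.Prime) (N : ℕ) :
    0 < spart T N :=
  Finset.prod_pos fun p hp => Nat.pow_pos (hT p hp).pos

private lemma spart_factorization {T : Finset ℕ} (hT : ∀ p ∈ T, p.Prime) (N q : ℕ) :
    (spart T N).factorization q = if q ∈ T then N.factorization q else 0 := by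
  unfold spart
  rw [Nat.factorization_prod (fun p hp => pow_ne_zero _ (hT p hp).pos.ne')]
  rw [Finset.sum_apply']
  have : ∀ p ∈ T, ((p ^ N.factorization p).factorization) q
      = if p = q then N.factorization p else 0 := by
    intro p hp
    rw [Nat.Prime.factorization_pow (hT p hp), Finsupp.single_apply]
  rw [Finset.sum_congr rfl this, Finset.sum_ite_eq' T q (fun p => N.factorization p)]

private lemma spart_dvd {T : Finset ℕ} (hT : ∀ p ∈ T, p.Prime) {N : ℕ} (hN : N ≠ 0) :
    spart T N ∣ N := by
  rw [← Nat.factorization_le_iff_dvd (spart_pos hT N).ne' hN]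
  intro q
  rw [spart_factorization hT]
  split <;> simp

private lemma not_dvd_div_spart {T : Finset ℕ} (hT : ∀ p ∈ T, p.Prime) {N : ℕ}
    (hN : N ≠ 0) {q : ℕ} (hq : q ∈ T) : ¬ q ∣ N / spart T N := by
  intro hdvd
  have hdvdN := spart_dvd hT hN
  have hMne : N / spart T N ≠ 0 := by
    rw [Nat.div_ne_zero_iff, and_iff_right (spart_pos hT N).ne']
    exact Nat.le_of_dvd (Nat.pos_of_ne_zero hN) hdvdN
  have h0 : (N / spart T N).factorization q = 0 := by
    rw [Nat.factorization_div hdvdN]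
    simp [spart_factorization hT, hq]
  have := (hT q hq).factorization_pos_of_dvd hMne hdvd
  omega

private lemma dvd_div_spart {T : Finset ℕ} (hT : ∀ p ∈ T, p.Prime) {N d : ℕ}
    (hdN : d ∣ N) (hcop : ∀ p ∈ T, ¬ p ∣ d) : d ∣ N / spart T N := by
  have hco : Nat.Coprime d (spart T N) := by
    apply Nat.Coprime.prod_right
    intro p hp
    exact Nat.Coprime.pow_right _ (((hT p hp).coprime_iff_not_dvd.mpr (hcop p hp)).symm)
  rcases hdN with ⟨e, he⟩
  by_cases hN : N = 0
  · subst hN; simp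
  · have hdvdN := spart_dvd hT hN
    apply hco.dvd_of_dvd_mul_right
    rw [Nat.div_mul_cancel hdvdN]
    exact ⟨e, he⟩

/-! ### F equals N divided by its S-part -/

private lemma F_spec {S : Set ℕ} (hSfin : S.Finite) (hSprime : ∀ p ∈ S, p.Prime)
    {X : ℤ} (hX : X ≠ 0) {f : ℕ}
    (hF : IsGreatest {d : ℕ | 0 < d ∧ (d : ℤ) ∣ X ∧ ∀ p ∈ S, ¬ p ∣ d} f) :
    f * spart hSfin.toFinset X.natAbs = X.natAbs := by
  set T := hSfin.toFinset with hT
  have hTprime : ∀ p ∈ T, p.Prime := fun p hp => hSprime p (hSfin.mem_toFinset.mp hp)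
  set N := X.natAbs with hN
  have hNne : N ≠ 0 := Int.natAbs_ne_zero.mpr hX
  have hdvdN := spart_dvd hTprime hNne
  set M := N / spart T N with hM
  have hMN : M * spart T N = N := Nat.div_mul_cancel hdvdN
  have hMpos : 0 < M := by
    rcases Nat.eq_zero_or_pos M with h | h
    · rw [h, zero_mul] at hMN; exact absurd hMN.symm hNne
    · exact h
  have hMmem : M ∈ {d : ℕ | 0 < d ∧ (d : ℤ) ∣ X ∧ ∀ p ∈ S, ¬ p ∣ d} := by
    refine ⟨hMpos, ?_, ?_⟩
    · have h1 : M ∣ N := ⟨spart T N, hMN.symm⟩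
      have h2 : (M : ℤ) ∣ (N : ℤ) := Int.natCast_dvd_natCast.mpr h1
      rwa [hN, Int.dvd_natAbs] at h2
    · intro p hp
      exact fun hdvd => not_dvd_div_spart hTprime hNne (hSfin.mem_toFinset.mpr hp) hdvd
  obtain ⟨⟨hfpos, hfdvd, hfcop⟩, hub⟩ := hF
  have hfN : f ∣ N := by
    have := Int.natAbs_dvd_natAbs.mpr hfdvd
    simpa [hN] using this
  have hfM : f ∣ M :=
    dvd_div_spart hTprime hfN (fun p hp => hfcop p (hSfin.mem_toFinset.mp hp))
  have h1 : f ≤ M := Nat.le_of_dvd hMpos hfM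
  have h2 : M ≤ f := hub hMmem
  have : f = M := le_antisymm h1 h2
  rw [this, hMN]

/-! ### nonvanishing -/

private lemma pow_sub_pow_ne {a b : ℤ} (h : a.natAbs ≠ b.natAbs) {k : ℕ} (hk : k ≠ 0) :
    a ^ k - b ^ k ≠ 0 := by
  intro he
  apply h
  have h1 : a ^ k = b ^ k := by linarith [sub_eq_zero.mp he]
  have h2 := congrArg Int.natAbs h1
  rw [Int.natAbs_pow, Int.natAbs_pow] at h2
  exact Nat.pow_left_injective hk h2

/-! ### Bridges between emultiplicity and factorization -/

private lemma emult_nat_eq {p n : ℕ} (hp : p.Prime) (hn : n ≠ 0) :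
    emultiplicity p n = (n.factorization p : ℕ∞) := by
  haveI := Fact.mk hp
  rw [Nat.factorization_def n hp]
  exact (padicValNat_eq_emultiplicity hn).symm

private lemma emult_int_eq {p : ℕ} (hp : p.Prime) {z : ℤ} (hz : z ≠ 0) :
    emultiplicity (p : ℤ) z = (z.natAbs.factorization p : ℕ∞) := by
  rw [← Int.emultiplicity_natAbs, emult_nat_eq hp (Int.natAbs_ne_zero.mpr hz)]

/-! ### The valuation bound via lifting the exponent -/

private lemma val_le {p : ℕ} (hp : p.Prime) {a b : ℤ} (hab : IsCoprime a b)
    (hne : a.natAbs ≠ b.natAbs) {n : ℕ} (hn : n ≠ 0) :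
    ((a ^ n - b ^ n).natAbs).factorization p ≤
      ((a ^ (2 * (p - 1)) - b ^ (2 * (p - 1))).natAbs).factorization p
        + n.factorization p := by
  have hpp : Prime (p : ℤ) := Int.prime_iff_natAbs_prime.mpr (by simpa using hp)
  have hNn : a ^ n - b ^ n ≠ 0 := pow_sub_pow_ne hne hn
  by_cases hpab : (p : ℤ) ∣ a * b
  · suffices h : ¬ (p : ℤ) ∣ a ^ n - b ^ n by
      have h0 : ((a ^ n - b ^ n).natAbs).factorization p = 0 := by
        apply Nat.factorization_eq_zero_of_not_dvd
        intro hd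
        exact h (by rwa [← Int.dvd_natAbs, Int.natCast_dvd_natCast])
      omega
    intro hdvd
    rcases hpp.dvd_mul.mp hpab with hpa | hpb
    · have hpb : (p : ℤ) ∣ b := by
        have h1 : (p : ℤ) ∣ b ^ n := by
          have := dvd_sub (dvd_pow hpa hn) hdvd
          simpa using this
        exact hpp.dvd_of_dvd_pow h1
      exact hpp.not_unit (hab.isUnit_of_dvd' hpa hpb)
    · have hpa : (p : ℤ) ∣ a := by
        have h1 : (p : ℤ) ∣ a ^ n := by
          have := dvd_add hdvd (dvd_pow hpb hn)
          simpa using this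
        exact hpp.dvd_of_dvd_pow h1
      exact hpp.not_unit (hab.isUnit_of_dvd' hpa hpb)
  · have hpa : ¬ (p : ℤ) ∣ a := fun h => hpab (h.mul_right b)
    have hpb : ¬ (p : ℤ) ∣ b := fun h => hpab (h.mul_left a)
    set e := 2 * (p - 1) with he
    have hene : e ≠ 0 := by have := hp.two_le; omega
    have hD : a ^ e - b ^ e ≠ 0 := pow_sub_pow_ne hne hene
    have core : emultiplicity (p : ℤ) (a ^ n - b ^ n) ≤
        emultiplicity (p : ℤ) (a ^ e - b ^ e) + emultiplicity p n := by
      rcases hp.eq_two_or_odd' with rfl | hodd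
      · -- p = 2
        have he2 : e = 2 := by norm_num [he]
        have hxy : (2 : ℤ) ∣ a - b := by
          have ha : ¬ Even a := by
            rw [even_iff_two_dvd]; exact_mod_cast hpa
          have hb : ¬ Even b := by
            rw [even_iff_two_dvd]; exact_mod_cast hpb
          have : Even (a - b) := Int.even_sub.mpr (by tauto)
          rwa [even_iff_two_dvd] at this
        have hx : ¬ (2 : ℤ) ∣ a := by exact_mod_cast hpa
        rw [he2]
        show emultiplicity (2:ℤ) (a ^ n - b ^ n) ≤
          emultiplicity (2:ℤ) (a ^ 2 - b ^ 2) + emultiplicity 2 n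
        have hsq : emultiplicity (2 : ℤ) (a ^ 2 - b ^ 2)
            = emultiplicity (2:ℤ) (a + b) + emultiplicity (2:ℤ) (a - b) := by
          rw [show a ^ 2 - b ^ 2 = (a + b) * (a - b) by ring]
          exact emultiplicity_mul Int.prime_two
        have formula := Int.two_pow_sub_pow (x := a) (y := b)
          (n := 2 * n) hxy hx (even_two_mul n)
        have hfin22 : FiniteMultiplicity (2:ℤ) 2 :=
          Int.finiteMultiplicity_iff.mpr ⟨by norm_num, by norm_num⟩
        have hcast : emultiplicity (2 : ℤ) (2 * (n:ℤ))
            = 1 + (emultiplicity (2:ℕ) n : ℕ∞) := by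
          rw [emultiplicity_mul Int.prime_two]
          congr 1
          · exact hfin22.emultiplicity_self
          · exact Int.natCast_emultiplicity 2 n
        have formula2 : emultiplicity (2 : ℤ) (a ^ (2 * n) - b ^ (2 * n)) + 1
            = (emultiplicity (2:ℤ) (a ^ 2 - b ^ 2) + emultiplicity (2:ℕ) n) + 1 := by
          push_cast at formula
          rw [formula, hcast, hsq]
          abel
        have hcancel := WithTop.add_right_cancel (by simp : (1 : ℕ∞) ≠ ⊤) formula2
        have hdvd2 : a ^ n - b ^ n ∣ a ^ (2 * n) - b ^ (2 * n) := by
          have h := sub_dvd_pow_sub_pow (a ^ n) (b ^ n) 2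
          have e1 : (a ^ n) ^ 2 = a ^ (2 * n) := by rw [← pow_mul, mul_comm]
          have e2 : (b ^ n) ^ 2 = b ^ (2 * n) := by rw [← pow_mul, mul_comm]
          rwa [e1, e2] at h
        calc emultiplicity ((2:ℤ)) (a ^ n - b ^ n)
            ≤ emultiplicity ((2:ℤ)) (a ^ (2*n) - b ^ (2*n)) :=
              emultiplicity_le_emultiplicity_of_dvd_right hdvd2
          _ = emultiplicity ((2:ℤ)) (a ^ 2 - b ^ 2) + emultiplicity (2:ℕ) n := hcancel
      · -- odd p
        haveI := Fact.mk hp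
        have ha0 : ((a : ZMod p)) ≠ 0 := by
          rw [Ne, ZMod.intCast_zmod_eq_zero_iff_dvd]; exact hpa
        have hb0 : ((b : ZMod p)) ≠ 0 := by
          rw [Ne, ZMod.intCast_zmod_eq_zero_iff_dvd]; exact hpb
        have hxy : (p : ℤ) ∣ a ^ e - b ^ e := by
          rw [← ZMod.intCast_zmod_eq_zero_iff_dvd]
          push_cast
          rw [he, mul_comm, pow_mul, pow_mul, ZMod.pow_card_sub_one_eq_one ha0,
            ZMod.pow_card_sub_one_eq_one hb0]
          simp
        have hx : ¬ (p : ℤ) ∣ a ^ e := fun h => hpa (hpp.dvd_of_dvd_pow h)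
        have lte := Int.emultiplicity_pow_sub_pow hp hodd hxy hx n
        have hdvd2 : a ^ n - b ^ n ∣ (a ^ e) ^ n - (b ^ e) ^ n := by
          have h := sub_dvd_pow_sub_pow (a ^ n) (b ^ n) e
          have e1 : (a ^ n) ^ e = (a ^ e) ^ n := by
            rw [← pow_mul, ← pow_mul, mul_comm]
          have e2 : (b ^ n) ^ e = (b ^ e) ^ n := by
            rw [← pow_mul, ← pow_mul, mul_comm]
          rwa [e1, e2] at h
        calc emultiplicity (p:ℤ) (a ^ n - b ^ n)
            ≤ emultiplicity (p:ℤ) ((a ^ e) ^ n - (b ^ e) ^ n) :=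
              emultiplicity_le_emultiplicity_of_dvd_right hdvd2
          _ = emultiplicity (p:ℤ) (a ^ e - b ^ e) + emultiplicity p n := lte
    rw [emult_int_eq hp hNn, emult_int_eq hp hD, emult_nat_eq hp hn] at core
    exact_mod_cast core

/-! ### Bundled facts about one system -/

private lemma system_facts (S : Set ℕ) (hSfin : S.Finite) (hSprime : ∀ p ∈ S, p.Prime)
    (a b : ℤ) (hab : IsCoprime a b) (hne : a.natAbs ≠ b.natAbs) :
    ∃ K : ℕ, 1 ≤ K ∧ ∀ n : ℕ, 1 ≤ n → ∀ f : ℕ,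
      IsGreatest {d : ℕ | 0 < d ∧ (d : ℤ) ∣ a ^ n - b ^ n ∧ ∀ p ∈ S, ¬ p ∣ d} f →
      f * spart hSfin.toFinset (a ^ n - b ^ n).natAbs = (a ^ n - b ^ n).natAbs ∧
      spart hSfin.toFinset (a ^ n - b ^ n).natAbs ≤ K * n := by
  set T := hSfin.toFinset with hT
  have hTprime : ∀ p ∈ T, p.Prime := fun p hp => hSprime p (hSfin.mem_toFinset.mp hp)
  set K : ℕ := ∏ p ∈ T,
      p ^ ((a ^ (2 * (p - 1)) - b ^ (2 * (p - 1))).natAbs.factorization p) with hK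
  refine ⟨K, ?_, ?_⟩
  · rw [hK]
    exact Finset.one_le_prod' fun p hp => Nat.one_le_pow _ _ (hTprime p hp).pos
  · intro n hn f hF
    have hnne : n ≠ 0 := by omega
    have hX : a ^ n - b ^ n ≠ 0 := pow_sub_pow_ne hne hnne
    refine ⟨F_spec hSfin hSprime hX hF, ?_⟩
    have hbound : spart T (a ^ n - b ^ n).natAbs ≤ K * spart T n := by
      unfold spart
      rw [hK, ← Finset.prod_mul_distrib]
      apply Finset.prod_le_prod' 
      intro p hp
      rw [← pow_add]
      exact Nat.pow_le_pow_right (hTprime p hp).pos (val_le (hTprime p hp) hab hne hnne)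
    have hsp_n : spart T n ≤ n :=
      Nat.le_of_dvd (by omega) (spart_dvd hTprime hnne)
    calc spart T (a ^ n - b ^ n).natAbs ≤ K * spart T n := hbound
      _ ≤ K * n := Nat.mul_le_mul_left _ hsp_n

/-! ### Size bounds on |a^n - b^n| -/

private lemma natAbs_upper (a b : ℤ) (n : ℕ) :
    (a ^ n - b ^ n).natAbs ≤ a.natAbs ^ n + b.natAbs ^ n := by
  calc (a ^ n - b ^ n).natAbs ≤ (a ^ n).natAbs + (b ^ n).natAbs := Int.natAbs_sub_le _ _
    _ = a.natAbs ^ n + b.natAbs ^ n := by rw [Int.natAbs_pow, Int.natAbs_pow]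

private lemma natAbs_lower (a b : ℤ) (n : ℕ) :
    a.natAbs ^ n ≤ (a ^ n - b ^ n).natAbs + b.natAbs ^ n := by
  calc a.natAbs ^ n = (a ^ n).natAbs := (Int.natAbs_pow a n).symm
    _ = ((a ^ n - b ^ n) + b ^ n).natAbs := by ring_nf
    _ ≤ (a ^ n - b ^ n).natAbs + (b ^ n).natAbs := Int.natAbs_add_le _ _
    _ = (a ^ n - b ^ n).natAbs + b.natAbs ^ n := by rw [Int.natAbs_pow]

/-! ### Arithmetic comparison lemmas -/

private lemma m_le_m {m₁ c₁ m₂ c₂ K₁ : ℕ} (hc₁ : c₁ < m₁) (hc₂ : c₂ < m₂) (hK₁ : 1 ≤ K₁)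
    {F N₁ N₂ sp₁ : ℕ → ℕ}
    (h₁ : ∀ n, 1 ≤ n → F n * sp₁ n = N₁ n)
    (hsp₁ : ∀ n, 1 ≤ n → sp₁ n ≤ K₁ * n)
    (hlo₁ : ∀ n, m₁ ^ n ≤ N₁ n + c₁ ^ n)
    (hFle : ∀ n, 1 ≤ n → F n ≤ N₂ n)
    (hup₂ : ∀ n, N₂ n ≤ m₂ ^ n + c₂ ^ n) : m₁ ≤ m₂ := by
  by_contra hlt
  push_neg at hlt
  set n := 8 * K₁ * m₂ ^ 2 + 2 + 2 * c₁ with hn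
  have hn1 : 1 ≤ n := by omega
  have h2c : 2 * c₁ ^ n ≤ m₁ ^ n := two_pow_le hc₁ (by omega) hn1
  have hchain : m₁ ^ n ≤ 2 * m₂ ^ n * (K₁ * n) + c₁ ^ n := by
    have e1 : m₁ ^ n ≤ F n * sp₁ n + c₁ ^ n := by rw [h₁ n hn1]; exact hlo₁ n
    have e2 : F n * sp₁ n ≤ N₂ n * (K₁ * n) :=
      Nat.mul_le_mul (hFle n hn1) (hsp₁ n hn1)
    have e3 : N₂ n ≤ 2 * m₂ ^ n := by
      have := hup₂ n
      have hcc : c₂ ^ n ≤ m₂ ^ n := Nat.pow_le_pow_left hc₂.le n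
      omega
    calc m₁ ^ n ≤ F n * sp₁ n + c₁ ^ n := e1
      _ ≤ N₂ n * (K₁ * n) + c₁ ^ n := by omega
      _ ≤ (2 * m₂ ^ n) * (K₁ * n) + c₁ ^ n :=
          Nat.add_le_add_right (Nat.mul_le_mul_right _ e3) _
      _ = 2 * m₂ ^ n * (K₁ * n) + c₁ ^ n := by ring_nf
  have hfinal : m₁ ^ n ≤ 4 * K₁ * n * m₂ ^ n := by
    have h3 : 2 * (m₁ ^ n) ≤ 2 * (2 * m₂ ^ n * (K₁ * n)) + 2 * c₁ ^ n := by omega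
    have h4 : 2 * (2 * m₂ ^ n * (K₁ * n)) = 4 * K₁ * n * m₂ ^ n := by ring
    omega
  have hgr : 4 * K₁ * n * m₂ ^ n < m₁ ^ n := by
    apply growth hlt
    have hr : 2 * (4 * K₁) * m₂ ^ 2 = 8 * K₁ * m₂ ^ 2 := by ring
    omega
  exact lt_irrefl _ (lt_of_le_of_lt hfinal hgr)

private lemma N_le_N {m c₁ c₂ K₂ : ℕ} (hc₁ : c₁ < m) (hc₂ : c₂ < m) (hK₂ : 1 ≤ K₂)
    {F N₁ N₂ sp₁ sp₂ : ℕ → ℕ}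
    (h₁ : ∀ n, 1 ≤ n → F n * sp₁ n = N₁ n)
    (h₂ : ∀ n, 1 ≤ n → F n * sp₂ n = N₂ n)
    (hsp₂ : ∀ n, 1 ≤ n → sp₂ n ≤ K₂ * n)
    (hup₁ : ∀ n, N₁ n ≤ m ^ n + c₁ ^ n)
    (hlo₂ : ∀ n, m ^ n ≤ N₂ n + c₂ ^ n)
    {n : ℕ} (hn : 6 * K₂ * (max c₁ c₂) ^ 2 + 2 ≤ n) : N₁ n ≤ N₂ n := by
  by_contra hlt
  push_neg at hlt
  have hn1 : 1 ≤ n := by omega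
  have hF1 : 0 < F n := by
    rcases Nat.eq_zero_or_pos (F n) with h | h
    · have := h₁ n hn1; rw [h, zero_mul] at this; omega
    · exact h
  have hsp : sp₂ n + 1 ≤ sp₁ n := by
    by_contra hc
    push_neg at hc
    have : F n * sp₁ n ≤ F n * sp₂ n := Nat.mul_le_mul_left _ (by omega)
    rw [h₁ n hn1, h₂ n hn1] at this
    omega
  have heq : N₁ n * sp₂ n = N₂ n * sp₁ n := by
    rw [← h₁ n hn1, ← h₂ n hn1]; ring
  have hstep : N₂ n * sp₂ n + N₂ n ≤ N₁ n * sp₂ n := by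
    calc N₂ n * sp₂ n + N₂ n = N₂ n * (sp₂ n + 1) := by ring
      _ ≤ N₂ n * sp₁ n := Nat.mul_le_mul_left _ hsp
      _ = N₁ n * sp₂ n := heq.symm
  have hN1up : N₁ n ≤ N₂ n + c₂ ^ n + c₁ ^ n := by
    have := hup₁ n
    have := hlo₂ n
    omega
  have hstep2 : N₂ n * sp₂ n + N₂ n ≤ N₂ n * sp₂ n + (c₂ ^ n + c₁ ^ n) * sp₂ n := by
    calc N₂ n * sp₂ n + N₂ n ≤ N₁ n * sp₂ n := hstep
      _ ≤ (N₂ n + c₂ ^ n + c₁ ^ n) * sp₂ n := Nat.mul_le_mul_right _ hN1up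
      _ = N₂ n * sp₂ n + (c₂ ^ n + c₁ ^ n) * sp₂ n := by ring
  have hN2 : N₂ n ≤ (c₂ ^ n + c₁ ^ n) * sp₂ n := by omega
  set c := max c₁ c₂ with hc
  have hcm : c < m := by
    rw [hc]; exact max_lt hc₁ hc₂
  have hc1c : c₁ ^ n ≤ c ^ n := Nat.pow_le_pow_left (le_max_left _ _) n
  have hc2c : c₂ ^ n ≤ c ^ n := Nat.pow_le_pow_left (le_max_right _ _) n
  have hmn : m ^ n ≤ 3 * K₂ * n * c ^ n := by
    have e1 : m ^ n ≤ (c₂ ^ n + c₁ ^ n) * sp₂ n + c₂ ^ n := by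
      have := hlo₂ n; omega
    have e2 : (c₂ ^ n + c₁ ^ n) * sp₂ n ≤ (2 * c ^ n) * (K₂ * n) :=
      Nat.mul_le_mul (by omega) (hsp₂ n hn1)
    have e3 : c ^ n ≤ K₂ * n * c ^ n := by
      have h1 : 1 * c ^ n ≤ (K₂ * n) * c ^ n :=
        Nat.mul_le_mul_right _ (Nat.one_le_iff_ne_zero.mpr
          (Nat.mul_ne_zero (by omega) (by omega)))
      omega
    have e4 : (2 * c ^ n) * (K₂ * n) = 2 * (K₂ * n * c ^ n) := by ring
    have e5 : 3 * K₂ * n * c ^ n = 3 * (K₂ * n * c ^ n) := by ring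
    omega
  have hgr : 3 * K₂ * n * c ^ n < m ^ n := by
    apply growth hcm
    have hr : 2 * (3 * K₂) * c ^ 2 = 6 * K₂ * c ^ 2 := by ring
    omega
  exact lt_irrefl _ (lt_of_le_of_lt hmn hgr)

/-! ### even exponents -/

private lemma natAbs_even_sub {a b : ℤ} (h : b.natAbs ≤ a.natAbs) (k : ℕ) :
    (a ^ (2 * k) - b ^ (2 * k)).natAbs = a.natAbs ^ (2 * k) - b.natAbs ^ (2 * k) := by
  have hev : Even (2 * k) := even_two_mul k
  have h1 : a ^ (2 * k) = (a.natAbs : ℤ) ^ (2 * k) := by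
    rw [← Int.abs_eq_natAbs, hev.pow_abs]
  have h2 : b ^ (2 * k) = (b.natAbs : ℤ) ^ (2 * k) := by
    rw [← Int.abs_eq_natAbs, hev.pow_abs]
  have hle : b.natAbs ^ (2 * k) ≤ a.natAbs ^ (2 * k) := Nat.pow_le_pow_left h _
  rw [h1, h2]
  rw [show ((a.natAbs : ℤ)) ^ (2*k) - ((b.natAbs : ℤ)) ^ (2*k)
      = ((a.natAbs ^ (2*k) - b.natAbs ^ (2*k) : ℕ) : ℤ) by push_cast [hle]; ring]
  exact Int.natAbs_natCast _

/-! ### The key lemma -/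

private lemma key_lemma (S : Set ℕ) (hSfin : S.Finite) (hSprime : ∀ p ∈ S, p.Prime)
    (a₁ b₁ a₂ b₂ : ℤ)
    (hab₁ : IsCoprime a₁ b₁) (hab₂ : IsCoprime a₂ b₂)
    (hb₁ : b₁ ≠ 0) (hb₂ : b₂ ≠ 0)
    (hlt₁ : b₁.natAbs < a₁.natAbs) (hlt₂ : b₂.natAbs < a₂.natAbs)
    (F : ℕ → ℕ)
    (hF₁ : ∀ n, 1 ≤ n →
      IsGreatest {d : ℕ | 0 < d ∧ (d : ℤ) ∣ a₁ ^ n - b₁ ^ n ∧ ∀ p ∈ S, ¬ p ∣ d} (F n))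
    (hF₂ : ∀ n, 1 ≤ n →
      IsGreatest {d : ℕ | 0 < d ∧ (d : ℤ) ∣ a₂ ^ n - b₂ ^ n ∧ ∀ p ∈ S, ¬ p ∣ d} (F n)) :
    a₁ * b₂ = a₂ * b₁ := by
  set m₁ := a₁.natAbs with hm₁
  set c₁ := b₁.natAbs with hc₁
  set m₂ := a₂.natAbs with hm₂
  set c₂ := b₂.natAbs with hc₂
  have hne₁ : a₁.natAbs ≠ b₁.natAbs := hlt₁.ne'
  have hne₂ : a₂.natAbs ≠ b₂.natAbs := hlt₂.ne'
  obtain ⟨K₁, hK₁, hsys₁⟩ := system_facts S hSfin hSprime a₁ b₁ hab₁ hne₁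
  obtain ⟨K₂, hK₂, hsys₂⟩ := system_facts S hSfin hSprime a₂ b₂ hab₂ hne₂
  set N₁ : ℕ → ℕ := fun n => (a₁ ^ n - b₁ ^ n).natAbs with hN₁
  set N₂ : ℕ → ℕ := fun n => (a₂ ^ n - b₂ ^ n).natAbs with hN₂
  set sp₁ : ℕ → ℕ := fun n => spart hSfin.toFinset (N₁ n) with hsp₁def
  set sp₂ : ℕ → ℕ := fun n => spart hSfin.toFinset (N₂ n) with hsp₂def
  have hfac₁ : ∀ n, 1 ≤ n → F n * sp₁ n = N₁ n := fun n hn =>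
    (hsys₁ n hn (F n) (hF₁ n hn)).1
  have hfac₂ : ∀ n, 1 ≤ n → F n * sp₂ n = N₂ n := fun n hn =>
    (hsys₂ n hn (F n) (hF₂ n hn)).1
  have hspb₁ : ∀ n, 1 ≤ n → sp₁ n ≤ K₁ * n := fun n hn =>
    (hsys₁ n hn (F n) (hF₁ n hn)).2
  have hspb₂ : ∀ n, 1 ≤ n → sp₂ n ≤ K₂ * n := fun n hn =>
    (hsys₂ n hn (F n) (hF₂ n hn)).2
  have hup₁ : ∀ n, N₁ n ≤ m₁ ^ n + c₁ ^ n := fun n => natAbs_upper a₁ b₁ n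
  have hup₂ : ∀ n, N₂ n ≤ m₂ ^ n + c₂ ^ n := fun n => natAbs_upper a₂ b₂ n
  have hlo₁ : ∀ n, m₁ ^ n ≤ N₁ n + c₁ ^ n := fun n => natAbs_lower a₁ b₁ n
  have hlo₂ : ∀ n, m₂ ^ n ≤ N₂ n + c₂ ^ n := fun n => natAbs_lower a₂ b₂ n
  have hFle₁ : ∀ n, 1 ≤ n → F n ≤ N₁ n := by
    intro n hn
    have hdvd := (hF₁ n hn).1.2.1
    have hpos : 0 < N₁ n :=
      Nat.pos_of_ne_zero (Int.natAbs_ne_zero.mpr (pow_sub_pow_ne hne₁ (by omega)))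
    exact Nat.le_of_dvd hpos (by simpa [hN₁] using Int.natAbs_dvd_natAbs.mpr hdvd)
  have hFle₂ : ∀ n, 1 ≤ n → F n ≤ N₂ n := by
    intro n hn
    have hdvd := (hF₂ n hn).1.2.1
    have hpos : 0 < N₂ n :=
      Nat.pos_of_ne_zero (Int.natAbs_ne_zero.mpr (pow_sub_pow_ne hne₂ (by omega)))
    exact Nat.le_of_dvd hpos (by simpa [hN₂] using Int.natAbs_dvd_natAbs.mpr hdvd)
  -- Step 2 : the maxima agree
  have hmm : m₁ = m₂ := by
    have h12 : m₁ ≤ m₂ := m_le_m hlt₁ hlt₂ hK₁ hfac₁ hspb₁ hlo₁ hFle₂ hup₂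
    have h21 : m₂ ≤ m₁ := m_le_m hlt₂ hlt₁ hK₂ hfac₂ hspb₂ hlo₂ hFle₁ hup₁
    omega
  have hlt₁2 : c₁ < m₂ := hmm ▸ hlt₁
  have hup₁2 : ∀ n, N₁ n ≤ m₂ ^ n + c₁ ^ n := hmm ▸ hup₁
  have hlo₁2 : ∀ n, m₂ ^ n ≤ N₁ n + c₁ ^ n := hmm ▸ hlo₁
  -- Step 3 : N₁ n = N₂ n for all large n
  set B := 6 * (max K₁ K₂) * (max c₁ c₂) ^ 2 + 2 with hB
  have hNeq : ∀ n, B ≤ n → N₁ n = N₂ n := by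
    intro n hn
    have hle12 : N₁ n ≤ N₂ n := by
      refine N_le_N hlt₁2 hlt₂ hK₂ hfac₁ hfac₂ hspb₂ hup₁2 hlo₂ (n := n) ?_
      have hb : 6 * K₂ * (max c₁ c₂) ^ 2 ≤ 6 * (max K₁ K₂) * (max c₁ c₂) ^ 2 :=
        Nat.mul_le_mul_right _ (Nat.mul_le_mul_left 6 (le_max_right _ _))
      omega
    have hle21 : N₂ n ≤ N₁ n := by
      refine N_le_N hlt₂ hlt₁2 hK₁ hfac₂ hfac₁ hspb₁ hup₂ hlo₁2 (n := n) ?_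
      have h2 : max c₂ c₁ = max c₁ c₂ := max_comm _ _
      rw [h2]
      have hb : 6 * K₁ * (max c₁ c₂) ^ 2 ≤ 6 * (max K₁ K₂) * (max c₁ c₂) ^ 2 :=
        Nat.mul_le_mul_right _ (Nat.mul_le_mul_left 6 (le_max_left _ _))
      omega
    omega
  -- Step 4 : even exponent gives c₁ = c₂
  have hcc : c₁ = c₂ := by
    have hE := hNeq (2 * (B + 1)) (by omega)
    have h1 : N₁ (2 * (B + 1)) = m₁ ^ (2 * (B+1)) - c₁ ^ (2 * (B+1)) :=
      natAbs_even_sub hlt₁.le (B + 1)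
    have h2 : N₂ (2 * (B + 1)) = m₂ ^ (2 * (B+1)) - c₂ ^ (2 * (B+1)) :=
      natAbs_even_sub hlt₂.le (B + 1)
    have hle1 : c₁ ^ (2 * (B+1)) ≤ m₁ ^ (2 * (B+1)) := Nat.pow_le_pow_left hlt₁.le _
    have hle2 : c₂ ^ (2 * (B+1)) ≤ m₂ ^ (2 * (B+1)) := Nat.pow_le_pow_left hlt₂.le _
    have hpow : c₁ ^ (2 * (B+1)) = c₂ ^ (2 * (B+1)) := by
      rw [h1, h2, ← hmm] at hE
      rw [← hmm] at hle2
      omega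
    exact Nat.pow_left_injective (by omega) hpow
  -- Step 5 : odd exponent
  have hO := hNeq (2 * B + 1) (by omega)
  have hOodd : Odd (2 * B + 1) := odd_two_mul_add_one B
  have ha12 : a₁ = a₂ ∨ a₁ = -a₂ := Int.natAbs_eq_natAbs_iff.mp hmm
  have hb12 : b₁ = b₂ ∨ b₁ = -b₂ := Int.natAbs_eq_natAbs_iff.mp hcc
  have hXY : a₁ ^ (2*B+1) - b₁ ^ (2*B+1) = a₂ ^ (2*B+1) - b₂ ^ (2*B+1) ∨
      a₁ ^ (2*B+1) - b₁ ^ (2*B+1) = -(a₂ ^ (2*B+1) - b₂ ^ (2*B+1)) :=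
    Int.natAbs_eq_natAbs_iff.mp hO
  have ha₁ne : a₁ ≠ 0 := by
    intro h
    have h0 : m₁ = 0 := by rw [hm₁, h]; simp
    omega
  have hpowne : ∀ z : ℤ, z ≠ 0 → z ^ (2*B+1) ≠ 0 := fun z hz => pow_ne_zero _ hz
  rcases ha12 with ha | ha <;> rcases hb12 with hb | hb
  · rw [ha, hb]
  · -- a₁ = a₂, b₁ = -b₂ : contradiction
    exfalso
    subst ha
    have hbb : b₂ = -b₁ := by rw [hb]; ring
    rcases hXY with h | h
    · rw [hbb, Odd.neg_pow hOodd] at h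
      have : b₁ ^ (2*B+1) = 0 := by linarith
      exact hb₁ (pow_eq_zero_iff (by omega) |>.mp this)
    · rw [hbb, Odd.neg_pow hOodd] at h
      have : a₁ ^ (2*B+1) = 0 := by linarith
      exact ha₁ne (pow_eq_zero_iff (by omega) |>.mp this)
  · -- a₁ = -a₂, b₁ = b₂ : contradiction
    exfalso
    have haa : a₂ = -a₁ := by rw [ha]; ring
    subst hb
    rcases hXY with h | h
    · rw [haa, Odd.neg_pow hOodd] at h
      have : a₁ ^ (2*B+1) = 0 := by linarith
      exact ha₁ne (pow_eq_zero_iff (by omega) |>.mp this)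
    · rw [haa, Odd.neg_pow hOodd] at h
      have : b₁ ^ (2*B+1) = 0 := by linarith
      exact hb₁ (pow_eq_zero_iff (by omega) |>.mp this)
  · rw [ha, hb]; ring

/-! ### the degenerate case -/

private lemma F_one_contra (S : Set ℕ) (hSfin : S.Finite) (hSprime : ∀ p ∈ S, p.Prime)
    (a b : ℤ) (hab : IsCoprime a b) (hb : b ≠ 0) (hlt : b.natAbs < a.natAbs)
    (F : ℕ → ℕ)
    (hF : ∀ n, 1 ≤ n →
      IsGreatest {d : ℕ | 0 < d ∧ (d : ℤ) ∣ a ^ n - b ^ n ∧ ∀ p ∈ S, ¬ p ∣ d} (F n))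
    (hone : ∀ n, 1 ≤ n → F n = 1) : False := by
  have hne : a.natAbs ≠ b.natAbs := hlt.ne'
  obtain ⟨K, hK, hsys⟩ := system_facts S hSfin hSprime a b hab hne
  set c := b.natAbs with hc
  set m := a.natAbs with hm
  have hcpos : 0 < c := Int.natAbs_pos.mpr hb
  set n := 2 * (K + 1) * c ^ 2 + 2 with hn
  have hn1 : 1 ≤ n := by omega
  obtain ⟨hfac, hbd⟩ := hsys n hn1 (F n) (hF n hn1)
  rw [hone n hn1, one_mul] at hfac
  have hlow : m ^ n ≤ (a ^ n - b ^ n).natAbs + c ^ n := natAbs_lower a b n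
  have hchain : m ^ n ≤ (K + 1) * n * c ^ n := by
    have e1 : (a ^ n - b ^ n).natAbs ≤ K * n := by rw [← hfac]; exact hbd
    have e2 : K * n ≤ K * n * c ^ n :=
      Nat.le_mul_of_pos_right _ (Nat.pow_pos hcpos)
    have e3 : c ^ n ≤ n * c ^ n :=
      Nat.le_mul_of_pos_left _ (by omega)
    have e4 : (K + 1) * n * c ^ n = K * n * c ^ n + n * c ^ n := by ring
    omega
  have hgr : (K + 1) * n * c ^ n < m ^ n := by
    apply growth hlt
    have hr : 2 * (K + 1) * c ^ 2 = 2 * (K + 1) * c ^ 2 := rfl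
    omega
  exact lt_irrefl _ (lt_of_le_of_lt hchain hgr)

private lemma isGreatest_swap {S : Set ℕ} {a b : ℤ} {n : ℕ} {f : ℕ}
    (h : IsGreatest {d : ℕ | 0 < d ∧ (d : ℤ) ∣ a ^ n - b ^ n ∧ ∀ p ∈ S, ¬ p ∣ d} f) :
    IsGreatest {d : ℕ | 0 < d ∧ (d : ℤ) ∣ b ^ n - a ^ n ∧ ∀ p ∈ S, ¬ p ∣ d} f := by
  have hset : {d : ℕ | 0 < d ∧ (d : ℤ) ∣ b ^ n - a ^ n ∧ ∀ p ∈ S, ¬ p ∣ d}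
      = {d : ℕ | 0 < d ∧ (d : ℤ) ∣ a ^ n - b ^ n ∧ ∀ p ∈ S, ¬ p ∣ d} := by
    ext d
    simp only [Set.mem_setOf_eq]
    constructor <;> rintro ⟨h1, h2, h3⟩ <;> exact ⟨h1, (dvd_sub_comm).mp h2, h3⟩
  rw [hset]
  exact h

theorem stmt_4 (S : Set ℕ) (hSfin : S.Finite) (hSprime : ∀ p ∈ S, p.Prime)
    (a₁ b₁ a₂ b₂ : ℤ)
    (hab₁ : IsCoprime a₁ b₁) (hb₁ : b₁ ≠ 0) (hne₁ : a₁.natAbs ≠ b₁.natAbs)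
    (hab₂ : IsCoprime a₂ b₂) (hb₂ : b₂ ≠ 0) (hne₂ : a₂.natAbs ≠ b₂.natAbs)
    (hS₁ : ∀ p : ℕ, p.Prime → (p : ℤ) ∣ a₁ * b₁ → p ∈ S)
    (hS₂ : ∀ p : ℕ, p.Prime → (p : ℤ) ∣ a₂ * b₂ → p ∈ S)
    (F₁ F₂ : ℕ → ℕ)
    (hF₁ : ∀ n, 1 ≤ n →
      IsGreatest {d : ℕ | 0 < d ∧ (d : ℤ) ∣ a₁ ^ n - b₁ ^ n ∧ ∀ p ∈ S, ¬ p ∣ d} (F₁ n))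
    (hF₂ : ∀ n, 1 ≤ n →
      IsGreatest {d : ℕ | 0 < d ∧ (d : ℤ) ∣ a₂ ^ n - b₂ ^ n ∧ ∀ p ∈ S, ¬ p ∣ d} (F₂ n))
    (hFeq : ∀ n, 1 ≤ n → F₁ n = F₂ n) :
    (a₁ : ℚ) / b₁ = (a₂ : ℚ) / b₂ ∨ (a₁ : ℚ) / b₁ = (b₂ : ℚ) / a₂ := by
  have hb₁Q : (b₁ : ℚ) ≠ 0 := Int.cast_ne_zero.mpr hb₁
  have hb₂Q : (b₂ : ℚ) ≠ 0 := Int.cast_ne_zero.mpr hb₂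
  -- transfer hF₂ to use F₁
  have hF₂' : ∀ n, 1 ≤ n →
      IsGreatest {d : ℕ | 0 < d ∧ (d : ℤ) ∣ a₂ ^ n - b₂ ^ n ∧ ∀ p ∈ S, ¬ p ∣ d} (F₁ n) := by
    intro n hn
    rw [hFeq n hn]
    exact hF₂ n hn
  by_cases ha₁ : a₁ = 0
  · -- then b₁ is a unit and F₁ ≡ 1
    have hu : IsUnit b₁ := isCoprime_zero_left.mp (ha₁ ▸ hab₁)
    have hone : ∀ n, 1 ≤ n → F₁ n = 1 := by
      intro n hn
      have hdvd := (hF₁ n hn).1.2.1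
      rw [ha₁, zero_pow (by omega : n ≠ 0), zero_sub] at hdvd
      have huu : IsUnit ((F₁ n : ℤ)) := isUnit_of_dvd_unit hdvd ((hu.pow n).neg)
      rcases Int.isUnit_iff.mp huu with h | h
      · exact_mod_cast h
      · exfalso; omega
    have ha₂ : a₂ = 0 := by
      by_contra ha₂
      have hone₂ : ∀ n, 1 ≤ n → F₂ n = 1 := by
        intro n hn; rw [← hFeq n hn]; exact hone n hn
      rcases lt_or_gt_of_ne hne₂ with h | h
      · exact F_one_contra S hSfin hSprime b₂ a₂ hab₂.symm ha₂ h F₂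
          (fun n hn => isGreatest_swap (hF₂ n hn)) hone₂
      · exact F_one_contra S hSfin hSprime a₂ b₂ hab₂ hb₂ h F₂ hF₂ hone₂
    left
    rw [ha₁, ha₂]
    simp
  · by_cases ha₂ : a₂ = 0
    · -- symmetric: contradiction, since F₁ ≡ 1 but a₁ ≠ 0
      exfalso
      have hu : IsUnit b₂ := isCoprime_zero_left.mp (ha₂ ▸ hab₂)
      have hone₂ : ∀ n, 1 ≤ n → F₂ n = 1 := by
        intro n hn
        have hdvd := (hF₂ n hn).1.2.1
        rw [ha₂, zero_pow (by omega : n ≠ 0), zero_sub] at hdvd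
        have huu : IsUnit ((F₂ n : ℤ)) := isUnit_of_dvd_unit hdvd ((hu.pow n).neg)
        rcases Int.isUnit_iff.mp huu with h | h
        · exact_mod_cast h
        · exfalso; omega
      have hone : ∀ n, 1 ≤ n → F₁ n = 1 := by
        intro n hn; rw [hFeq n hn]; exact hone₂ n hn
      rcases lt_or_gt_of_ne hne₁ with h | h
      · exact F_one_contra S hSfin hSprime b₁ a₁ hab₁.symm ha₁ h F₁
          (fun n hn => isGreatest_swap (hF₁ n hn)) hone
      · exact F_one_contra S hSfin hSprime a₁ b₁ hab₁ hb₁ h F₁ hF₁ hone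
    · -- main case
      have ha₁Q : (a₁ : ℚ) ≠ 0 := Int.cast_ne_zero.mpr ha₁
      have ha₂Q : (a₂ : ℚ) ≠ 0 := Int.cast_ne_zero.mpr ha₂
      rcases lt_or_gt_of_ne hne₁ with h₁ | h₁ <;> rcases lt_or_gt_of_ne hne₂ with h₂ | h₂
      · -- |a₁| < |b₁|, |a₂| < |b₂| : swap both
        have hkey := key_lemma S hSfin hSprime b₁ a₁ b₂ a₂ hab₁.symm hab₂.symm
          ha₁ ha₂ h₁ h₂ F₁
          (fun n hn => isGreatest_swap (hF₁ n hn))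
          (fun n hn => isGreatest_swap (hF₂' n hn))
        -- b₁ * a₂ = b₂ * a₁
        left
        rw [div_eq_div_iff hb₁Q hb₂Q]
        exact_mod_cast (by linarith [hkey] : a₁ * b₂ = a₂ * b₁)
      · -- |a₁| < |b₁|, |b₂| < |a₂| : swap first
        have hkey := key_lemma S hSfin hSprime b₁ a₁ a₂ b₂ hab₁.symm hab₂
          ha₁ hb₂ h₁ h₂ F₁
          (fun n hn => isGreatest_swap (hF₁ n hn))
          hF₂'
        -- b₁ * b₂ = a₂ * a₁
        right
        rw [div_eq_div_iff hb₁Q ha₂Q]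
        exact_mod_cast (by linarith [hkey] : a₁ * a₂ = b₂ * b₁)
      · -- |b₁| < |a₁|, |a₂| < |b₂| : swap second
        have hkey := key_lemma S hSfin hSprime a₁ b₁ b₂ a₂ hab₁ hab₂.symm
          hb₁ ha₂ h₁ h₂ F₁ hF₁
          (fun n hn => isGreatest_swap (hF₂' n hn))
        -- a₁ * a₂ = b₂ * b₁
        right
        rw [div_eq_div_iff hb₁Q ha₂Q]
        exact_mod_cast hkey
      · -- no swaps
        have hkey := key_lemma S hSfin hSprime a₁ b₁ a₂ b₂ hab₁ hab₂
          hb₁ hb₂ h₁ h₂ F₁ hF₁ hF₂'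
        left
        rw [div_eq_div_iff hb₁Q hb₂Q]
        exact_mod_cast hkey
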